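/- Assume c > 1. Then for every ε > 0 there exists an integer n₀ ≥ 0 such that for all n ∈ ℤ with |n| ≥ n₀ one has v_{n+1}/v_n ≤ c^{1+ε}. -/

import Mathlib

noncomputable section

/-- `φ(x) = x·sin((π/2)·log₂(1+log₂(1+x)))`. -/
noncomputable def phi (x : ℝ) : ℝ :=
  x * Real.sin (Real.pi / 2 * Real.logb 2 (1 + Real.logb 2 (1 + x)))

/-- `ψ(x) = √x·sin((π/2)·log₂(1+log₂(1+x)))`. -/
noncomputable def psi (x : ℝ) : ℝ :=
  Real.sqrt x * Real.sin (Real.pi / 2 * Real.logb 2 (1 + Real.logb 2 (1 + x)))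

/-- `v_n = c^{φ(|n|)}·e^{ψ(|n|)}`. -/
noncomputable def vw (c : ℝ) (n : ℤ) : ℝ :=
  c ^ phi |(n : ℝ)| * Real.exp (psi |(n : ℝ)|)

/-- The sine factor. -/
noncomputable def sfun (x : ℝ) : ℝ :=
  Real.sin (Real.pi / 2 * Real.logb 2 (1 + Real.logb 2 (1 + x)))

lemma sin_lip (a b : ℝ) : |Real.sin a - Real.sin b| ≤ |a - b| := by
  rw [Real.sin_sub_sin]
  have h1 : |Real.sin ((a - b) / 2)| ≤ |(a - b) / 2| := Real.abs_sin_le_abs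
  have h2 : |Real.cos ((a + b) / 2)| ≤ 1 := Real.abs_cos_le_one _
  calc |2 * Real.sin ((a - b) / 2) * Real.cos ((a + b) / 2)|
      = 2 * |Real.sin ((a - b) / 2)| * |Real.cos ((a + b) / 2)| := by
        rw [abs_mul, abs_mul]; norm_num
    _ ≤ 2 * |(a - b) / 2| * 1 := by
        apply mul_le_mul _ h2 (abs_nonneg _) (by positivity)
        exact mul_le_mul_of_nonneg_left h1 (by norm_num)
    _ = |a - b| := by rw [abs_div, abs_two]; ring

lemma u_ge_two {x : ℝ} (hx : 1 ≤ x) : 2 ≤ 1 + Real.logb 2 (1 + x) := by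
  have h1 : Real.logb 2 2 ≤ Real.logb 2 (1 + x) :=
    Real.logb_le_logb_of_le (by norm_num) (by norm_num) (by linarith)
  have h2 : Real.logb 2 2 = 1 := by simp
  linarith

lemma sdiff {x : ℝ} (hx : 1 ≤ x) :
    |sfun (x + 1) - sfun x| ≤ 5 / ((1 + x) * (1 + Real.logb 2 (1 + x))) := by
  have hL2 : (0.6931:ℝ) < Real.log 2 := by
    have := Real.log_two_gt_d9; linarith
  have hL2pos : (0:ℝ) < Real.log 2 := by linarith
  set u : ℝ := 1 + Real.logb 2 (1 + x) with hu
  set u' : ℝ := 1 + Real.logb 2 (2 + x) with hu'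
  have hu2 : 2 ≤ u := u_ge_two hx
  have huu' : u ≤ u' := by
    have := Real.logb_le_logb_of_le (b := 2) (by norm_num : (1:ℝ) < 2)
      (by linarith : (0:ℝ) < 1 + x) (by linarith : (1:ℝ) + x ≤ 2 + x)
    simp only [hu, hu']; linarith
  -- bound u' - u
  have hstep : u' - u ≤ 1 / ((1 + x) * Real.log 2) := by
    have h1 : u' - u = (Real.log (2 + x) - Real.log (1 + x)) / Real.log 2 := by
      simp only [hu, hu', Real.logb]; ring
    have h2 : Real.log (2 + x) - Real.log (1 + x) = Real.log ((2 + x) / (1 + x)) := by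
      rw [Real.log_div (by linarith) (by linarith)]
    have h3 : Real.log ((2 + x) / (1 + x)) ≤ (2 + x) / (1 + x) - 1 :=
      Real.log_le_sub_one_of_pos (by positivity)
    have h4 : (2 + x) / (1 + x) - 1 = 1 / (1 + x) := by
      field_simp
      norm_num
    rw [h1, h2, div_le_div_iff₀ hL2pos (by positivity)]
    calc Real.log ((2 + x) / (1 + x)) * ((1 + x) * Real.log 2)
        ≤ (1 / (1 + x)) * ((1 + x) * Real.log 2) := by
          apply mul_le_mul_of_nonneg_right _ (by positivity)
          rw [← h4]; exact h3
      _ = 1 * Real.log 2 := by field_simp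
  -- bound the argument difference
  have hargdiff : Real.pi / 2 * Real.logb 2 u' - Real.pi / 2 * Real.logb 2 u
      ≤ 5 / ((1 + x) * u) := by
    have h1 : Real.logb 2 u' - Real.logb 2 u = Real.log (u' / u) / Real.log 2 := by
      rw [Real.log_div (by linarith) (by linarith)]; simp only [Real.logb]; ring
    have h3 : Real.log (u' / u) ≤ u' / u - 1 :=
      Real.log_le_sub_one_of_pos (div_pos (by linarith) (by linarith))
    have h4 : u' / u - 1 = (u' - u) / u := by field_simp
    have h5 : (u' - u) / u ≤ 1 / ((1 + x) * Real.log 2 * u) := by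
      rw [div_le_div_iff₀ (by linarith) (by positivity)]
      calc (u' - u) * ((1 + x) * Real.log 2 * u)
          ≤ (1 / ((1 + x) * Real.log 2)) * ((1 + x) * Real.log 2 * u) := by
            apply mul_le_mul_of_nonneg_right hstep (by positivity)
        _ = 1 * u := by field_simp
    have hpi : Real.pi ≤ 4 := Real.pi_le_four
    have hlog : Real.log (u' / u) / Real.log 2 ≤ 1 / ((1 + x) * Real.log 2 ^ 2 * u) := by
      rw [div_le_div_iff₀ hL2pos (by positivity)]
      calc Real.log (u' / u) * ((1 + x) * Real.log 2 ^ 2 * u)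
          ≤ (1 / ((1 + x) * Real.log 2 * u)) * ((1 + x) * Real.log 2 ^ 2 * u) := by
            apply mul_le_mul_of_nonneg_right _ (by positivity)
            calc Real.log (u' / u) ≤ (u' - u) / u := by rw [← h4]; exact h3
              _ ≤ _ := h5
        _ = 1 * Real.log 2 := by field_simp
    have key : Real.pi / 2 * (1 / ((1 + x) * Real.log 2 ^ 2 * u)) ≤ 5 / ((1 + x) * u) := by
      rw [show Real.pi / 2 * (1 / ((1 + x) * Real.log 2 ^ 2 * u))
            = (Real.pi / 2) / ((1 + x) * Real.log 2 ^ 2 * u) by ring,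
          div_le_div_iff₀ (by positivity) (by positivity)]
      have h6 : Real.pi / 2 ≤ 5 * Real.log 2 ^ 2 := by nlinarith
      calc Real.pi / 2 * ((1 + x) * u)
          ≤ 5 * Real.log 2 ^ 2 * ((1 + x) * u) := by
            apply mul_le_mul_of_nonneg_right _ (by positivity)
            linarith
        _ = 5 * ((1 + x) * Real.log 2 ^ 2 * u) := by ring
    calc Real.pi / 2 * Real.logb 2 u' - Real.pi / 2 * Real.logb 2 u
        = Real.pi / 2 * (Real.logb 2 u' - Real.logb 2 u) := by ring
      _ = Real.pi / 2 * (Real.log (u' / u) / Real.log 2) := by rw [h1]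
      _ ≤ Real.pi / 2 * (1 / ((1 + x) * Real.log 2 ^ 2 * u)) := by
          apply mul_le_mul_of_nonneg_left hlog (by positivity)
      _ ≤ 5 / ((1 + x) * u) := key
  have hargmono : Real.pi / 2 * Real.logb 2 u ≤ Real.pi / 2 * Real.logb 2 u' := by
    apply mul_le_mul_of_nonneg_left _ (by positivity)
    exact Real.logb_le_logb_of_le (by norm_num) (by linarith) huu'
  have h2x : (1:ℝ) + (x + 1) = 2 + x := by ring
  calc |sfun (x + 1) - sfun x|
      ≤ |Real.pi / 2 * Real.logb 2 (1 + Real.logb 2 (1 + (x+1)))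
          - Real.pi / 2 * Real.logb 2 (1 + Real.logb 2 (1 + x))| := sin_lip _ _
    _ = |Real.pi / 2 * Real.logb 2 u' - Real.pi / 2 * Real.logb 2 u| := by rw [h2x]
    _ ≤ 5 / ((1 + x) * u) := by
        rw [abs_of_nonneg (by linarith)]; exact hargdiff

lemma phidiff {x : ℝ} (hx : 1 ≤ x) :
    |phi (x + 1) - phi x| ≤ 1 + 5 / (1 + Real.logb 2 (1 + x)) := by
  have hs : |sfun (x + 1)| ≤ 1 := Real.abs_sin_le_one _
  have hd := sdiff hx
  have hu2 : 2 ≤ 1 + Real.logb 2 (1 + x) := u_ge_two hx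
  have hid : phi (x + 1) - phi x = sfun (x + 1) + x * (sfun (x + 1) - sfun x) := by
    simp only [phi, sfun]; ring
  rw [hid]
  calc |sfun (x + 1) + x * (sfun (x + 1) - sfun x)|
      ≤ |sfun (x + 1)| + |x * (sfun (x + 1) - sfun x)| := abs_add_le _ _
    _ ≤ 1 + x * (5 / ((1 + x) * (1 + Real.logb 2 (1 + x)))) := by
        rw [abs_mul, abs_of_nonneg (by linarith : (0:ℝ) ≤ x)]
        exact add_le_add hs (mul_le_mul_of_nonneg_left hd (by linarith))
    _ ≤ 1 + 5 / (1 + Real.logb 2 (1 + x)) := by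
        have heq : x * (5 / ((1 + x) * (1 + Real.logb 2 (1 + x))))
            = 5 * x / ((1 + x) * (1 + Real.logb 2 (1 + x))) := by ring
        have : 5 * x / ((1 + x) * (1 + Real.logb 2 (1 + x)))
            ≤ 5 / (1 + Real.logb 2 (1 + x)) := by
          rw [div_le_div_iff₀ (by positivity) (by linarith)]
          nlinarith
        linarith [heq ▸ this]

lemma psidiff {x : ℝ} (hx : 1 ≤ x) :
    |psi (x + 1) - psi x| ≤ 6 / Real.sqrt x := by
  have hs : |sfun (x + 1)| ≤ 1 := Real.abs_sin_le_one _
  have hd := sdiff hx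
  have hu2 : 2 ≤ 1 + Real.logb 2 (1 + x) := u_ge_two hx
  have hsx : (1:ℝ) ≤ Real.sqrt x := by
    rw [show (1:ℝ) = Real.sqrt 1 by simp]; exact Real.sqrt_le_sqrt hx
  have hsxpos : (0:ℝ) < Real.sqrt x := by linarith
  have hsq : Real.sqrt x ^ 2 = x := Real.sq_sqrt (by linarith)
  have hid : psi (x + 1) - psi x
      = (Real.sqrt (x + 1) - Real.sqrt x) * sfun (x + 1)
        + Real.sqrt x * (sfun (x + 1) - sfun x) := by
    simp only [psi, sfun]; ring
  have hsd : Real.sqrt (x + 1) - Real.sqrt x ≤ 1 / (2 * Real.sqrt x) := by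
    have hat : Real.sqrt x * (1 / (2 * Real.sqrt x)) = 1 / 2 := by
      field_simp
    have h0 : x + 1 ≤ (Real.sqrt x + 1 / (2 * Real.sqrt x)) ^ 2 := by
      nlinarith [sq_nonneg (1 / (2 * Real.sqrt x))]
    have h1 : Real.sqrt (x + 1) ≤ Real.sqrt x + 1 / (2 * Real.sqrt x) := by
      have := Real.sqrt_le_sqrt h0
      rwa [Real.sqrt_sq (by positivity)] at this
    linarith
  have hsd0 : 0 ≤ Real.sqrt (x + 1) - Real.sqrt x := by
    have := Real.sqrt_le_sqrt (by linarith : x ≤ x + 1)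
    linarith
  have hsecond : Real.sqrt x * |sfun (x + 1) - sfun x| ≤ 5 / (2 * Real.sqrt x) := by
    calc Real.sqrt x * |sfun (x + 1) - sfun x|
        ≤ Real.sqrt x * (5 / ((1 + x) * (1 + Real.logb 2 (1 + x)))) :=
          mul_le_mul_of_nonneg_left hd (by positivity)
      _ ≤ 5 / (2 * Real.sqrt x) := by
          rw [show Real.sqrt x * (5 / ((1 + x) * (1 + Real.logb 2 (1 + x))))
                = 5 * Real.sqrt x / ((1 + x) * (1 + Real.logb 2 (1 + x))) by ring,
              div_le_div_iff₀ (by positivity) (by positivity)]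
          nlinarith [Real.sqrt_nonneg x]
  rw [hid]
  calc |(Real.sqrt (x + 1) - Real.sqrt x) * sfun (x + 1)
        + Real.sqrt x * (sfun (x + 1) - sfun x)|
      ≤ |(Real.sqrt (x + 1) - Real.sqrt x) * sfun (x + 1)|
        + |Real.sqrt x * (sfun (x + 1) - sfun x)| := abs_add_le _ _
    _ ≤ (Real.sqrt (x + 1) - Real.sqrt x) * 1 + Real.sqrt x * |sfun (x + 1) - sfun x| := by
        rw [abs_mul, abs_mul, abs_of_nonneg hsd0, abs_of_nonneg (Real.sqrt_nonneg x)]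
        exact add_le_add (mul_le_mul_of_nonneg_left hs hsd0) le_rfl
    _ ≤ 1 / (2 * Real.sqrt x) + 5 / (2 * Real.sqrt x) := by
        refine add_le_add (by linarith) hsecond
    _ ≤ 6 / Real.sqrt x := by
        rw [← add_div, div_le_div_iff₀ (by positivity) (by positivity)]
        nlinarith [Real.sqrt_nonneg x]


/-- The main ratio bound on the exponent scale. -/
lemma expo_bound {c ε x : ℝ} (hc : 1 < c) (hε : 0 < ε) (hx : 1 ≤ x)
    (hX1 : (2:ℝ) ^ (10 / ε) ≤ x) (hX2 : (12 / (ε * Real.log c)) ^ 2 ≤ x) :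
    (1 + 5 / (1 + Real.logb 2 (1 + x))) * Real.log c + 6 / Real.sqrt x
      ≤ (1 + ε) * Real.log c := by
  have hlc : 0 < Real.log c := Real.log_pos hc
  have hsxpos : (0:ℝ) < Real.sqrt x := Real.sqrt_pos.mpr (by linarith)
  -- u ≥ 10/ε
  have hu : 10 / ε ≤ 1 + Real.logb 2 (1 + x) := by
    have h1 : Real.logb 2 ((2:ℝ) ^ (10 / ε)) ≤ Real.logb 2 (1 + x) := by
      apply Real.logb_le_logb_of_le (by norm_num) (by positivity)
      linarith
    rw [Real.logb_rpow (by norm_num) (by norm_num)] at h1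
    linarith
  have hu2 : 2 ≤ 1 + Real.logb 2 (1 + x) := u_ge_two hx
  have h5u : 5 / (1 + Real.logb 2 (1 + x)) ≤ ε / 2 := by
    rw [div_le_div_iff₀ (by linarith) (by norm_num)]
    have h10 : 10 / ε * ε = 10 := by field_simp
    nlinarith
  -- √x ≥ 12/(ε log c)
  have hsx : 12 / (ε * Real.log c) ≤ Real.sqrt x := by
    have := Real.sqrt_le_sqrt hX2
    rwa [Real.sqrt_sq (by positivity)] at this
  have h6x : 6 / Real.sqrt x ≤ ε * Real.log c / 2 := by
    rw [div_le_div_iff₀ hsxpos (by norm_num)]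
    have h12 : 12 / (ε * Real.log c) * (ε * Real.log c) = 12 := by field_simp
    nlinarith [mul_le_mul_of_nonneg_right hsx (le_of_lt (mul_pos hε hlc))]
  have : 5 / (1 + Real.logb 2 (1 + x)) * Real.log c ≤ ε / 2 * Real.log c :=
    mul_le_mul_of_nonneg_right h5u (by linarith)
  nlinarith

lemma vw_eq (c : ℝ) (hc : 0 < c) (n : ℤ) :
    vw c n = Real.exp (Real.log c * phi |(n:ℝ)| + psi |(n:ℝ)|) := by
  rw [vw, Real.rpow_def_of_pos hc, Real.exp_add]

lemma ratio_le {c ε : ℝ} (hc : 1 < c) (a b : ℝ)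
    (h : (phi a - phi b) * Real.log c + (psi a - psi b) ≤ (1 + ε) * Real.log c)
    : Real.exp (Real.log c * phi a + psi a) / Real.exp (Real.log c * phi b + psi b)
      ≤ c ^ (1 + ε) := by
  rw [← Real.exp_sub, Real.rpow_def_of_pos (by linarith), Real.exp_le_exp]
  nlinarith [h]

theorem stmt9 (c : ℝ) (hc : 1 < c) :
    ∀ ε : ℝ, 0 < ε → ∃ n₀ : ℤ, 0 ≤ n₀ ∧
      ∀ n : ℤ, n₀ ≤ |n| → vw c (n + 1) / vw c n ≤ c ^ (1 + ε) := by
  intro ε hε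
  have hc0 : (0:ℝ) < c := by linarith
  have hlc : 0 < Real.log c := Real.log_pos hc
  set M : ℝ := max ((2:ℝ) ^ (10 / ε)) ((12 / (ε * Real.log c)) ^ 2) with hM
  refine ⟨max 2 (⌈M⌉ + 1), le_trans (by norm_num) (le_max_left _ _), ?_⟩
  -- key: for suitable x, exponent difference bound in both directions
  have key : ∀ x : ℝ, 1 ≤ x → M ≤ x →
      ((Real.log c * phi (x + 1) + psi (x + 1)) - (Real.log c * phi x + psi x)
        ≤ (1 + ε) * Real.log c)
      ∧ ((Real.log c * phi x + psi x) - (Real.log c * phi (x + 1) + psi (x + 1))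
        ≤ (1 + ε) * Real.log c) := by
    intro x hx hMx
    have hX1 : (2:ℝ) ^ (10 / ε) ≤ x := le_trans (le_max_left _ _) hMx
    have hX2 : (12 / (ε * Real.log c)) ^ 2 ≤ x := le_trans (le_max_right _ _) hMx
    have hphi := phidiff hx
    have hpsi := psidiff hx
    have hb := expo_bound hc hε hx hX1 hX2
    have h1 := abs_le.mp hphi
    have h2 := abs_le.mp hpsi
    have hu2 : 2 ≤ 1 + Real.logb 2 (1 + x) := u_ge_two hx
    constructor <;> nlinarith [h1.1, h1.2, h2.1, h2.2]
  intro n hn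
  have hM1 : (1:ℝ) ≤ M := by
    have : (1:ℝ) ≤ (2:ℝ) ^ (10 / ε) :=
      Real.one_le_rpow (by norm_num) (by positivity)
    exact le_trans this (le_max_left _ _)
  have hceil : M ≤ ((⌈M⌉ + 1 : ℤ) : ℝ) - 1 := by
    push_cast
    have := Int.le_ceil M
    linarith
  rcases le_or_gt 0 n with hn0 | hn0
  · -- n ≥ 0
    have habs : |n| = n := abs_of_nonneg hn0
    rw [habs] at hn
    have hx1 : ((⌈M⌉ + 1 : ℤ) : ℝ) ≤ (n : ℝ) := by
      exact_mod_cast le_trans (le_max_right _ _) hn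
    have hxM : M ≤ (n : ℝ) := by linarith
    have hxge1 : (1:ℝ) ≤ (n : ℝ) := by linarith
    have ha : |((n + 1 : ℤ) : ℝ)| = (n : ℝ) + 1 := by
      rw [abs_of_nonneg (by push_cast; linarith)]; push_cast; ring
    have hb : |((n : ℤ) : ℝ)| = (n : ℝ) := abs_of_nonneg (by linarith)
    rw [vw_eq c hc0, vw_eq c hc0, ha, hb]
    exact ratio_le hc _ _ (by nlinarith [(key (n:ℝ) hxge1 hxM).1])
  · -- n < 0, so n ≤ -1
    have hn1 : n ≤ -1 := by omega
    have habs : |n| = -n := abs_of_neg hn0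
    rw [habs] at hn
    set x : ℝ := -(n : ℝ) - 1 with hxdef
    have hnn : ((⌈M⌉ + 1 : ℤ) : ℝ) ≤ -(n : ℝ) := by
      have : (⌈M⌉ + 1 : ℤ) ≤ -n := le_trans (le_max_right _ _) hn
      exact_mod_cast this
    have hxM : M ≤ x := by rw [hxdef]; linarith
    have hxge1 : (1:ℝ) ≤ x := by linarith
    have ha : |((n + 1 : ℤ) : ℝ)| = x := by
      have h0 : ((n + 1 : ℤ) : ℝ) ≤ 0 := by
        exact_mod_cast (show (n + 1 : ℤ) ≤ 0 by omega)
      rw [abs_of_nonpos h0, hxdef]; push_cast; ring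
    have hb : |((n : ℤ) : ℝ)| = x + 1 := by
      have h0 : ((n : ℤ) : ℝ) ≤ 0 := by exact_mod_cast hn0.le
      rw [abs_of_nonpos h0, hxdef]; ring
    rw [vw_eq c hc0, vw_eq c hc0, ha, hb]
    exact ratio_le hc _ _ (by nlinarith [(key x hxge1 hxM).2])
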